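/- Let 𝔽 be a field and let S_3 = {{1,2,3},{1,2,4},{1,2,5},{1,4,5},{2,4,5},{1,3,6},{1,3,7},{1,6,7},{3,6,7},{2,3,8},{2,3,9},{2,8,9},{3,8,9}} ⊆ C([9],3). Then the simplicial matroid Sim_3^9(S_3) over 𝔽 has rank 10, and the 3-hyperclique complex ⟨S_3⟩ is D-perfect; in fact the sequence ({4,5},{6,7},{8,9},{1,5},{1,4},{1,6},{1,7},{2,8},{2,9},{1,2}) is a basic linear sequence witnessing that ⟨S_3⟩ is D-perfect. -/

import Mathlib

/-!
Common definitions for simplicial matroids, following Cordovil–Lemos–Linhares Sales,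
"Dirac's theorem on simplicial matroids".

We model `[n] = {1,…,n}` by `Fin n`, and a subset of `[n]` by a `Finset (Fin n)`.
A family `S_k ⊆ C([n],k)` is a `Finset (Finset (Fin n))` (all of whose members
have cardinality `k`, which is imposed by hypotheses in the theorems).
-/

open Finset

/-- The incidence number `[F' : F]`: if `F = i₁ < i₂ < ⋯ < iₘ` and `F' = F \ {iⱼ}`
then `[F' : F] = (-1)ʲ` (with `j` the 1-based position of the deleted element),
and `[F' : F] = 0` otherwise. -/
def inc {n : ℕ} (F' F : Finset (Fin n)) : ℤ :=
  ∑ i ∈ F, if F' = F.erase i then (-1 : ℤ) ^ (F.filter (fun j => j ≤ i)).card else 0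

/-- The family `C([n], m)` of `m`-element subsets of `[n]`, as a type. -/
abbrev Csets (n m : ℕ) := {F : Finset (Fin n) // F.card = m}

/-- `∂_k F`, the boundary of a single `k`-subset `F` of `[n]`,
as a vector of `𝔽^{C([n],k-1)}`. -/
def bvec (𝔽 : Type*) [Field 𝔽] (n k : ℕ) (F : Finset (Fin n)) : Csets n (k - 1) → 𝔽 :=
  fun F' => ((inc F'.1 F : ℤ) : 𝔽)

/-- Independence in the simplicial matroid `Sim_k^n(S_k)` over `𝔽`:
`X ⊆ S_k` is independent iff the vectors `∂_k F`, `F ∈ X`, are linearly independent. -/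
def SimIndep (𝔽 : Type*) [Field 𝔽] (n k : ℕ) (Sk X : Finset (Finset (Fin n))) : Prop :=
  X ⊆ Sk ∧ LinearIndependent 𝔽 (fun F : X => bvec 𝔽 n k F.1)

/-- A circuit of `Sim_k^n(S_k)`: a minimal dependent subset of the ground set. -/
def SimCircuit (𝔽 : Type*) [Field 𝔽] (n k : ℕ) (Sk C : Finset (Finset (Fin n))) : Prop :=
  C ⊆ Sk ∧ ¬ LinearIndependent 𝔽 (fun F : C => bvec 𝔽 n k F.1) ∧
    ∀ C' ⊂ C, LinearIndependent 𝔽 (fun F : C' => bvec 𝔽 n k F.1)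

/-- The rank (in `Sim_k^n`) of a set `X` of `k`-subsets of `[n]`:
the dimension of the span of the boundaries of its members. -/
noncomputable def simRank (𝔽 : Type*) [Field 𝔽] (n k : ℕ) (X : Finset (Finset (Fin n))) : ℕ :=
  Module.finrank 𝔽 (Submodule.span 𝔽 ((fun F => bvec 𝔽 n k F) '' (X : Set (Finset (Fin n)))))

/-- A cocircuit of `Sim_k^n(S_k)`, i.e. a circuit of the dual matroid:
a minimal set `C ⊆ S_k` whose complement does not span (`X` is independent in the dual
matroid iff `r(E ∖ X) = r(E)`). -/
def SimCocircuit (𝔽 : Type*) [Field 𝔽] (n k : ℕ) (Sk C : Finset (Finset (Fin n))) : Prop :=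
  C ⊆ Sk ∧ simRank 𝔽 n k (Sk \ C) < simRank 𝔽 n k Sk ∧
    ∀ C' ⊂ C, simRank 𝔽 n k (Sk \ C') = simRank 𝔽 n k Sk

/-- The boundary map `∂_k : 𝔽^{S_k} → 𝔽^{C([n],k-1)}`. -/
noncomputable def bdryMap (𝔽 : Type*) [Field 𝔽] (n k : ℕ) (Sk : Finset (Finset (Fin n))) :
    (↥Sk → 𝔽) →ₗ[𝔽] (Csets n (k - 1) → 𝔽) :=
  Matrix.mulVecLin (Matrix.of fun (F' : Csets n (k - 1)) (F : ↥Sk) => ((inc F'.1 F.1 : ℤ) : 𝔽))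

/-- The coboundary `δ^{k-1} V` of a `(k-1)`-subset `V` of `[n]`,
as a vector of `𝔽^{S_k}`; its `F`-coordinate is `[V : F]`. -/
def cobdry (𝔽 : Type*) [Field 𝔽] {n : ℕ} (Sk : Finset (Finset (Fin n)))
    (V : Finset (Fin n)) : ↥Sk → 𝔽 :=
  fun F => ((inc V F.1 : ℤ) : 𝔽)

/-- The boundary `∂_{k+1} X` of a `(k+1)`-subset `X` of `[n]`, regarded as a vector
of `𝔽^{S_k}`; its `F`-coordinate is `[F : X]`. -/
def pbdry (𝔽 : Type*) [Field 𝔽] {n : ℕ} (Sk : Finset (Finset (Fin n)))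
    (X : Finset (Fin n)) : ↥Sk → 𝔽 :=
  fun F => ((inc F.1 X : ℤ) : 𝔽)

open scoped Classical in
/-- The support of a vector of `𝔽^{S_k}`, as a set of `k`-subsets of `[n]`. -/
noncomputable def suppFin {𝔽 : Type*} [Field 𝔽] {n : ℕ} {Sk : Finset (Finset (Fin n))}
    (v : ↥Sk → 𝔽) : Finset (Finset (Fin n)) :=
  (Sk.attach.filter fun F => v F ≠ 0).image Subtype.val

/-- `supp(δ^{k-1} V) ⊆ S_k`. -/
noncomputable def suppδ (𝔽 : Type*) [Field 𝔽] {n : ℕ} (Sk : Finset (Finset (Fin n)))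
    (V : Finset (Fin n)) : Finset (Finset (Fin n)) :=
  suppFin (cobdry 𝔽 Sk V)

/-- The cocircuit space of `Sim_k^n(S_k)`: the orthogonal complement, with respect to the
standard bilinear form on `𝔽^{S_k}`, of the circuit space `ker ∂_k`. -/
noncomputable def cocircSpace (𝔽 : Type*) [Field 𝔽] (n k : ℕ) (Sk : Finset (Finset (Fin n))) :
    Submodule 𝔽 (↥Sk → 𝔽) where
  carrier := {w | ∀ v ∈ LinearMap.ker (bdryMap 𝔽 n k Sk), ∑ F, v F * w F = 0}
  zero_mem' := by intro v hv; simp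
  add_mem' := by
    intro a b ha hb v hv
    have h1 := ha v hv
    have h2 := hb v hv
    simp only [Pi.add_apply, mul_add, Finset.sum_add_distrib]
    rw [h1, h2, add_zero]
  smul_mem' := by
    intro c w hw v hv
    have h := hw v hv
    simp only [Pi.smul_apply, smul_eq_mul]
    calc ∑ F, v F * (c * w F) = ∑ F, c * (v F * w F) := by
          exact Finset.sum_congr rfl fun F _ => by ring
      _ = c * ∑ F, v F * w F := (Finset.mul_sum _ _ _).symm
      _ = 0 := by rw [h, mul_zero]

/-- The faces of the `k`-hyperclique complex `⟨S_k⟩`: all `F ⊆ [n]` with `|F| < k`,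
together with all `F` every `k`-element subset of which lies in `S_k`. -/
def IsFace {n : ℕ} (k : ℕ) (Sk : Finset (Finset (Fin n))) (F : Finset (Fin n)) : Prop :=
  F.card < k ∨ ∀ G ⊆ F, G.card = k → G ∈ Sk

/-- A facet of `⟨S_k⟩`: an inclusion-maximal face. -/
def IsFacet {n : ℕ} (k : ℕ) (Sk : Finset (Finset (Fin n))) (F : Finset (Fin n)) : Prop :=
  IsFace k Sk F ∧ ∀ G, IsFace k Sk G → F ⊆ G → F = G

/-- `V` is simplicial in `⟨S_k⟩` if there is exactly one facet `X` of `⟨S_k⟩`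
with `V ⊊ X`. -/
def SimplicialFace {n : ℕ} (k : ℕ) (Sk : Finset (Finset (Fin n))) (V : Finset (Fin n)) : Prop :=
  ∃! X, IsFacet k Sk X ∧ V ⊂ X

/-- The `k`-skeleta of the complexes `Δ_0 = ⟨S_k⟩`, `Δ_{j+1} = Δ_j ∖∖ V_j`, where
`Δ ∖∖ V = ⟨(skeleton of Δ) ∖ supp(δ^{k-1} V)⟩` (0-indexed). -/
noncomputable def delSeq (𝔽 : Type*) [Field 𝔽] {n : ℕ} (Sk : Finset (Finset (Fin n)))
    (V : ℕ → Finset (Fin n)) : ℕ → Finset (Finset (Fin n))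
  | 0 => Sk
  | j + 1 => delSeq 𝔽 Sk V j \ suppδ 𝔽 (delSeq 𝔽 Sk V j) (V j)

/-- `C*_j := supp(δ^{k-1} V_j) ∖ ⋃_{i<j} supp(δ^{k-1} V_i)` (0-indexed). -/
noncomputable def Cstar (𝔽 : Type*) [Field 𝔽] {n : ℕ} (Sk : Finset (Finset (Fin n)))
    (V : ℕ → Finset (Fin n)) (j : ℕ) : Finset (Finset (Fin n)) :=
  suppδ 𝔽 Sk (V j) \ (Finset.range j).biUnion (fun i => suppδ 𝔽 Sk (V i))

/-- `(V_1,…,V_r)` (0-indexed: `V 0, …, V (r-1)`) is a basic linear sequence for `⟨S_k⟩`,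
where `r` is the rank of `Sim_k^n(S_k)`: each `V_j` is a `(k-1)`-subset of `[n]` and each
`C*_j` is a cocircuit of `Sim_k^n(S_k(Δ_{j-1}))`. -/
def BasicLinearSeq (𝔽 : Type*) [Field 𝔽] (n k : ℕ) (Sk : Finset (Finset (Fin n))) (r : ℕ)
    (V : ℕ → Finset (Fin n)) : Prop :=
  simRank 𝔽 n k Sk = r ∧ (∀ j < r, (V j).card = k - 1) ∧
    ∀ j < r, SimCocircuit 𝔽 n k (delSeq 𝔽 Sk V j) (Cstar 𝔽 Sk V j)

/-- `⟨S_k⟩` is D-perfect: there is a basic linear sequence `V_1,…,V_r` such that each `V_j`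
is simplicial in `Δ_{j-1}`. -/
def DPerfect (𝔽 : Type*) [Field 𝔽] (n k : ℕ) (Sk : Finset (Finset (Fin n))) : Prop :=
  ∃ V : ℕ → Finset (Fin n),
    BasicLinearSeq 𝔽 n k Sk (simRank 𝔽 n k Sk) V ∧
      ∀ j < simRank 𝔽 n k Sk, SimplicialFace k (delSeq 𝔽 Sk V j) (V j)

/-- A flat of `Sim_k^n(S_k)`: a closed subset of the ground set. -/
def SimFlat (𝔽 : Type*) [Field 𝔽] (n k : ℕ) (Sk X : Finset (Finset (Fin n))) : Prop :=
  X ⊆ Sk ∧ ∀ F ∈ Sk,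
    bvec 𝔽 n k F ∈ Submodule.span 𝔽 ((fun G => bvec 𝔽 n k G) '' (X : Set (Finset (Fin n)))) →
      F ∈ X

/-- A hyperplane of `Sim_k^n(S_k)`: a flat of rank one less than the rank of the matroid. -/
def SimHyperplane (𝔽 : Type*) [Field 𝔽] (n k : ℕ) (Sk H : Finset (Finset (Fin n))) : Prop :=
  SimFlat 𝔽 n k Sk H ∧ simRank 𝔽 n k H + 1 = simRank 𝔽 n k Sk

/-- A modular flat of `Sim_k^n(S_k)`:
`r(X) + r(Y) = r(X ∪ Y) + r(X ∩ Y)` for every flat `Y`. -/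
def ModularFlat (𝔽 : Type*) [Field 𝔽] (n k : ℕ) (Sk X : Finset (Finset (Fin n))) : Prop :=
  SimFlat 𝔽 n k Sk X ∧ ∀ Y, SimFlat 𝔽 n k Sk Y →
    simRank 𝔽 n k X + simRank 𝔽 n k Y = simRank 𝔽 n k (X ∪ Y) + simRank 𝔽 n k (X ∩ Y)

open scoped Classical in
/-- The closure of `X` in `Sim_k^n(S_k)`. -/
noncomputable def simClosure (𝔽 : Type*) [Field 𝔽] (n k : ℕ)
    (Sk X : Finset (Finset (Fin n))) : Finset (Finset (Fin n)) :=
  Sk.filter fun F =>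
    bvec 𝔽 n k F ∈ Submodule.span 𝔽 ((fun G => bvec 𝔽 n k G) '' (X : Set (Finset (Fin n))))

/-- `Sim_k^n(S_k)` is supersolvable: it admits a maximal chain of modular flats
`cl(∅) = X_0 ⊊ X_1 ⊊ ⋯ ⊊ X_r = S_k`, `r` the rank. -/
def Supersolvable (𝔽 : Type*) [Field 𝔽] (n k : ℕ) (Sk : Finset (Finset (Fin n))) : Prop :=
  ∃ X : ℕ → Finset (Finset (Fin n)),
    X 0 = simClosure 𝔽 n k Sk ∅ ∧ X (simRank 𝔽 n k Sk) = Sk ∧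
      (∀ i < simRank 𝔽 n k Sk, X i ⊂ X (i + 1)) ∧
      ∀ i ≤ simRank 𝔽 n k Sk, ModularFlat 𝔽 n k Sk (X i)

/-- `H` is a dense hyperplane of `Sim_k^n(ground)`: a hyperplane of the form
`ground ∖ supp(δ^{k-1} V)` for some `(k-1)`-subset `V` simplicial in `⟨ground⟩`. -/
def DenseHyp (𝔽 : Type*) [Field 𝔽] (n k : ℕ) (ground H : Finset (Finset (Fin n))) : Prop :=
  SimHyperplane 𝔽 n k ground H ∧
    ∃ V : Finset (Fin n), V.card = k - 1 ∧ SimplicialFace k ground V ∧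
      H = ground \ suppδ 𝔽 ground V

/-- `Sim_k^n(S_k)` is superdense: there is a chain `∅ = X_0 ⊊ X_1 ⊊ ⋯ ⊊ X_r = S_k` of flats
(`r` the rank) with each `X_i` a dense hyperplane of `Sim_k^n(X_{i+1})`. -/
def Superdense (𝔽 : Type*) [Field 𝔽] (n k : ℕ) (Sk : Finset (Finset (Fin n))) : Prop :=
  ∃ X : ℕ → Finset (Finset (Fin n)),
    X 0 = ∅ ∧ X (simRank 𝔽 n k Sk) = Sk ∧
      (∀ i ≤ simRank 𝔽 n k Sk, SimFlat 𝔽 n k Sk (X i)) ∧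
      (∀ i < simRank 𝔽 n k Sk, X i ⊂ X (i + 1)) ∧
      ∀ i < simRank 𝔽 n k Sk, DenseHyp 𝔽 n k (X (i + 1)) (X i)

/-- `Sim_k^n(S_k)` is triangulable over `𝔽`: the boundaries of the `(k+1)`-faces of `⟨S_k⟩`
span the circuit space `ker ∂_k`. -/
def Triangulable (𝔽 : Type*) [Field 𝔽] (n k : ℕ) (Sk : Finset (Finset (Fin n))) : Prop :=
  Submodule.span 𝔽
      {v : ↥Sk → 𝔽 | ∃ X : Finset (Fin n), X.card = k + 1 ∧ IsFace k Sk X ∧ v = pbdry 𝔽 Sk X}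
    = LinearMap.ker (bdryMap 𝔽 n k Sk)

/-- `Sim_k^n(S_k)` is strongly triangulable over `𝔽`: there are `(k+1)`-faces `X_1,…,X_{m'}`
of `⟨S_k⟩` whose boundaries span `ker ∂_k` and such that every circuit `C` has a
representing vector `C⃗` with support `C` which is a combination, with nonzero coefficients,
of boundaries `∂_{k+1} X_{i_j}` with `⋃_{F ∈ C} F = ⋃_j X_{i_j}`. -/
def StronglyTriangulable (𝔽 : Type*) [Field 𝔽] (n k : ℕ)
    (Sk : Finset (Finset (Fin n))) : Prop :=
  ∃ (m' : ℕ) (Xs : Fin m' → Finset (Fin n)),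
    (∀ i, (Xs i).card = k + 1 ∧ IsFace k Sk (Xs i)) ∧
    Submodule.span 𝔽 (Set.range fun i => pbdry 𝔽 Sk (Xs i)) = LinearMap.ker (bdryMap 𝔽 n k Sk) ∧
    ∀ C, SimCircuit 𝔽 n k Sk C →
      ∃ (s : ℕ) (idx : Fin s → Fin m') (a : Fin s → 𝔽) (Cv : ↥Sk → 𝔽),
        (∀ j, a j ≠ 0) ∧ suppFin Cv = C ∧
        Cv = ∑ j, a j • pbdry 𝔽 Sk (Xs (idx j)) ∧
        C.biUnion id = Finset.univ.biUnion fun j : Fin s => Xs (idx j)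

/-- The simple graph `([n], S_2)`. -/
def graphOf {n : ℕ} (S2 : Finset (Finset (Fin n))) : SimpleGraph (Fin n) where
  Adj u v := u ≠ v ∧ ({u, v} : Finset (Fin n)) ∈ S2
  symm := by
    constructor
    intro u v h
    exact ⟨h.1.symm, by rw [Finset.pair_comm]; exact h.2⟩
  loopless := by constructor; intro u h; exact h.1 rfl

/-- A simple graph is chordal if every cycle of length at least four has a chord, i.e. an
edge of the graph joining two non-consecutive vertices of the cycle. -/
def Chordal {α : Type*} (G : SimpleGraph α) : Prop :=
  ∀ (v : α) (w : G.Walk v v), w.IsCycle → 4 ≤ w.length →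
    ∃ u₁ u₂, u₁ ∈ w.support ∧ u₂ ∈ w.support ∧ G.Adj u₁ u₂ ∧ s(u₁, u₂) ∉ w.edges

/-- The family `S_3` of the example on `[9]` (vertices relabelled `i ↦ i - 1` to `Fin 9`). -/
def exS3 : Finset (Finset (Fin 9)) :=
  {{0,1,2}, {0,1,3}, {0,1,4}, {0,3,4}, {1,3,4}, {0,2,5}, {0,2,6}, {0,5,6}, {2,5,6},
   {1,2,7}, {1,2,8}, {1,7,8}, {2,7,8}}

/-- The sequence `45, 67, 89, 15, 14, 16, 17, 28, 29, 12` (relabelled `i ↦ i - 1`). -/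
def exVseq : ℕ → Finset (Fin 9) := fun j =>
  [({3,4} : Finset (Fin 9)), {5,6}, {7,8}, {0,4}, {0,3}, {0,5}, {0,6}, {1,7}, {1,8}, {0,1}].getD j ∅

section Aux
variable {𝔽 : Type*} [Field 𝔽]

lemma inc_trichotomy {n : ℕ} (F' F : Finset (Fin n)) :
    inc F' F = 0 ∨ inc F' F = 1 ∨ inc F' F = -1 := by
  by_cases h : ∃ i ∈ F, F' = F.erase i
  · obtain ⟨i₀, hi₀, he⟩ := h
    have hval : inc F' F = (-1 : ℤ) ^ (F.filter (fun j => j ≤ i₀)).card := by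
      rw [inc, Finset.sum_eq_single_of_mem i₀ hi₀]
      · rw [if_pos he]
      · intro j hj hne
        rw [if_neg]
        intro hc
        have h1 : i₀ ∉ F' := he ▸ Finset.notMem_erase i₀ F
        have h2 : i₀ ∈ F' := hc ▸ Finset.mem_erase.mpr ⟨hne.symm, hi₀⟩
        exact h1 h2
    rcases Nat.even_or_odd (F.filter (fun j => j ≤ i₀)).card with hp | hp
    · right; left; rw [hval, hp.neg_one_pow]
    · right; right; rw [hval, hp.neg_one_pow]
  · left
    rw [inc]
    apply Finset.sum_eq_zero
    intro i hi
    rw [if_neg]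
    exact fun hc => h ⟨i, hi, hc⟩

lemma cast_inc_ne_zero {n : ℕ} {F' F : Finset (Fin n)} (h : inc F' F ≠ 0) :
    ((inc F' F : ℤ) : 𝔽) ≠ 0 := by
  rcases inc_trichotomy F' F with h0 | h1 | h1
  · exact absurd h0 h
  · rw [h1]; simp
  · rw [h1]; simp

lemma cast_inc_eq_zero_iff {n : ℕ} {F' F : Finset (Fin n)} :
    ((inc F' F : ℤ) : 𝔽) = 0 ↔ inc F' F = 0 := by
  constructor
  · intro h
    by_contra hne
    exact cast_inc_ne_zero (𝔽 := 𝔽) hne h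
  · intro h; rw [h]; simp

lemma suppδ_eq {n : ℕ} (Sk : Finset (Finset (Fin n))) (V : Finset (Fin n)) :
    suppδ 𝔽 Sk V = Sk.filter (fun F => ¬ (inc V F = 0)) := by
  apply Finset.ext
  intro G
  simp only [suppδ, suppFin, cobdry, Finset.mem_image, Finset.mem_filter, Finset.mem_attach,
    true_and, Subtype.exists, exists_and_left, exists_prop, exists_eq_right_right]
  simp only [ne_eq, cast_inc_eq_zero_iff (𝔽 := 𝔽)]
  constructor
  · rintro ⟨a, ha, hm, rfl⟩
    exact ⟨ha, (Finset.mem_filter.mp hm).2⟩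
  · rintro ⟨h1, h2⟩
    exact ⟨G, h1, Finset.mem_filter.mpr ⟨Finset.mem_attach _ _, h2⟩, rfl⟩

lemma triangular_indep {α : Type*} {m : ℕ} (v : Fin m → α → 𝔽) (c : Fin m → α)
    (h0 : ∀ i j : Fin m, j < i → v j (c i) = 0) (h1 : ∀ i, v i (c i) ≠ 0) :
    LinearIndependent 𝔽 v := by
  rw [Fintype.linearIndependent_iff]
  intro g hg
  set M : Matrix (Fin m) (Fin m) 𝔽 := Matrix.of fun i j => v j (c i) with hM
  have hbt : M.BlockTriangular id := fun i j hij => h0 i j hij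
  have hdet : M.det ≠ 0 := by
    rw [Matrix.det_of_upperTriangular hbt]
    exact Finset.prod_ne_zero_iff.mpr fun i _ => h1 i
  have hmv : M.mulVec g = 0 := by
    funext i
    have h2 := congrFun hg (c i)
    simp only [Finset.sum_apply, Pi.smul_apply, smul_eq_mul, Pi.zero_apply] at h2
    simp only [Matrix.mulVec, dotProduct, hM, Matrix.of_apply, Pi.zero_apply]
    rw [← h2]
    exact Finset.sum_congr rfl fun j _ => mul_comm _ _
  have := Matrix.eq_zero_of_mulVec_eq_zero hdet hmv
  exact fun i => congrFun this i

lemma simRank_eq_of {m : ℕ} (X : Finset (Finset (Fin 9))) (w : Fin m → Finset (Fin 9))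
    (c : Fin m → Csets 9 2)
    (hw : ∀ i, w i ∈ X)
    (htri : ∀ i j : Fin m, j < i → inc (c i).1 (w j) = 0)
    (hdiag : ∀ i, inc (c i).1 (w i) ≠ 0)
    (hspan : ∀ F ∈ X, bvec 𝔽 9 3 F ∈ Submodule.span 𝔽 (Set.range fun i => bvec 𝔽 9 3 (w i))) :
    simRank 𝔽 9 3 X = m := by
  have hind : LinearIndependent 𝔽 (fun i => bvec 𝔽 9 3 (w i)) := by
    apply triangular_indep _ (fun i => c i)
    · intro i j hij
      show ((inc (c i).1 (w j) : ℤ) : 𝔽) = 0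
      rw [htri i j hij]; simp
    · intro i
      exact cast_inc_ne_zero (hdiag i)
  have hspan_eq : Submodule.span 𝔽 ((fun F => bvec 𝔽 9 3 F) '' (X : Set (Finset (Fin 9)))) =
      Submodule.span 𝔽 (Set.range fun i => bvec 𝔽 9 3 (w i)) := by
    apply le_antisymm
    · rw [Submodule.span_le]
      rintro _ ⟨F, hF, rfl⟩
      exact hspan F hF
    · apply Submodule.span_mono
      rintro _ ⟨i, rfl⟩
      exact ⟨w i, hw i, rfl⟩
  rw [simRank, hspan_eq, finrank_span_eq_card hind, Fintype.card_fin]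

lemma bvec_combo {a b c d : Finset (Fin 9)}
    (h : ∀ G : Finset (Fin 9), G.card = 2 → inc G a = inc G b + inc G c - inc G d) :
    bvec 𝔽 9 3 a = bvec 𝔽 9 3 b + bvec 𝔽 9 3 c - bvec 𝔽 9 3 d := by
  funext F'
  have := h F'.1 F'.2
  simp only [bvec, Pi.add_apply, Pi.sub_apply]
  rw [this]
  push_cast
  ring

end Aux
section Facet
variable {n k : ℕ}

lemma isFace_subset {S : Finset (Finset (Fin n))} {F G : Finset (Fin n)}
    (hG : IsFace k S G) (hFG : F ⊆ G) : IsFace k S F := by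
  by_cases h : F.card < k
  · exact Or.inl h
  · right
    intro H hH hcard
    rcases hG with hg | hg
    · exact absurd (lt_of_le_of_lt (Finset.card_le_card hFG) hg) h
    · exact hg H (hH.trans hFG) hcard

lemma isFacet_iff {S : Finset (Finset (Fin n))} {F : Finset (Fin n)} :
    IsFacet k S F ↔ IsFace k S F ∧ ∀ x ∉ F, ¬ IsFace k S (insert x F) := by
  constructor
  · rintro ⟨hf, hmax⟩
    refine ⟨hf, fun x hx hface => ?_⟩
    have := hmax _ hface (Finset.subset_insert x F)
    exact hx (this ▸ Finset.mem_insert_self x F)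
  · rintro ⟨hf, hmax⟩
    refine ⟨hf, fun G hG hFG => ?_⟩
    by_contra hne
    obtain ⟨x, hxG, hxF⟩ := Finset.exists_of_ssubset (Finset.ssubset_iff_subset_ne.mpr ⟨hFG, hne⟩)
    exact hmax x hxF (isFace_subset hG (Finset.insert_subset hxG hFG))

def faceD (k : ℕ) (S : Finset (Finset (Fin n))) (F : Finset (Fin n)) : Prop :=
  F.card < k ∨ ∀ G ∈ F.powersetCard k, G ∈ S

instance (k : ℕ) (S : Finset (Finset (Fin n))) (F : Finset (Fin n)) :
    Decidable (faceD k S F) := by unfold faceD; infer_instance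

lemma isFace_iff_faceD {S : Finset (Finset (Fin n))} {F : Finset (Fin n)} :
    IsFace k S F ↔ faceD k S F := by
  unfold IsFace faceD
  apply or_congr_right
  constructor
  · intro h G hG
    obtain ⟨h1, h2⟩ := Finset.mem_powersetCard.mp hG
    exact h G h1 h2
  · intro h G h1 h2
    exact h G (Finset.mem_powersetCard.mpr ⟨h1, h2⟩)

lemma simplicialFace_iff {S : Finset (Finset (Fin n))} {V : Finset (Fin n)} :
    SimplicialFace k S V ↔
      ∃! X, V ⊂ X ∧ (faceD k S X ∧ ∀ x ∉ X, ¬ faceD k S (insert x X)) := by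
  unfold SimplicialFace
  apply existsUnique_congr
  intro X
  rw [isFacet_iff]
  simp only [isFace_iff_faceD]
  tauto

end Facet


lemma simplicialFace_of {S : Finset (Finset (Fin 9))} {V X₀ : Finset (Fin 9)}
    (hV : V.card = 2) (hss : V ⊂ X₀)
    (hface : IsFace 3 S X₀)
    (hout : ∀ x, x ∉ X₀ → insert x V ∉ S) :
    SimplicialFace 3 S V := by
  have hsub : ∀ y, IsFace 3 S y → V ⊂ y → y ⊆ X₀ := by
    intro y hyF hVy x hx
    by_cases hxV : x ∈ V
    · exact hss.1 hxV
    · by_contra hxX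
      apply hout x hxX
      have hycard : 2 < y.card := by
        have h1 := Finset.card_lt_card hVy
        omega
      rcases hyF with h | h
      · omega
      · exact h (insert x V) (Finset.insert_subset hx (subset_of_ssubset hVy))
          (by rw [Finset.card_insert_of_notMem hxV, hV])
  have hfacet : IsFacet 3 S X₀ := by
    refine ⟨hface, fun G hG hXG => ?_⟩
    exact subset_antisymm hXG (hsub G hG (Finset.ssubset_of_ssubset_of_subset hss hXG))
  refine ⟨X₀, ⟨hfacet, hss⟩, ?_⟩
  rintro y ⟨hyF, hVy⟩
  exact hyF.2 X₀ hface (hsub y hyF.1 hVy)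


lemma ssubset_pair {α : Type*} [DecidableEq α] {a b : α} {C : Finset α}
    (h : C ⊂ ({a, b} : Finset α)) : C = ∅ ∨ C = {a} ∨ C = {b} := by
  by_cases ha : a ∈ C <;> by_cases hb : b ∈ C
  · exfalso
    apply h.ne
    apply Finset.Subset.antisymm h.subset
    intro x hx
    rcases Finset.mem_insert.mp hx with rfl | hx'
    · exact ha
    · exact (Finset.mem_singleton.mp hx') ▸ hb
  · right; left
    apply Finset.Subset.antisymm
    · intro x hx
      rcases Finset.mem_insert.mp (h.subset hx) with rfl | hx'
      · exact Finset.mem_singleton_self x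
      · exact absurd ((Finset.mem_singleton.mp hx') ▸ hx) hb
    · exact Finset.singleton_subset_iff.mpr ha
  · right; right
    apply Finset.Subset.antisymm
    · intro x hx
      rcases Finset.mem_insert.mp (h.subset hx) with rfl | hx'
      · exact absurd hx ha
      · exact hx'
    · exact Finset.singleton_subset_iff.mpr hb
  · left
    rw [Finset.eq_empty_iff_forall_notMem]
    intro x hx
    rcases Finset.mem_insert.mp (h.subset hx) with rfl | hx'
    · exact ha hx
    · exact hb (((Finset.mem_singleton.mp hx')) ▸ hx)

lemma delSeq_zero {𝔽 : Type*} [Field 𝔽] (Sk : Finset (Finset (Fin 9))) (V : ℕ → Finset (Fin 9)) :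
    delSeq 𝔽 Sk V 0 = Sk := rfl

lemma delSeq_succ {𝔽 : Type*} [Field 𝔽] (Sk : Finset (Finset (Fin 9))) (V : ℕ → Finset (Fin 9))
    (j : ℕ) : delSeq 𝔽 Sk V (j + 1) = delSeq 𝔽 Sk V j \ suppδ 𝔽 (delSeq 𝔽 Sk V j) (V j) := rfl

set_option maxRecDepth 400000
def setE0a : Finset (Finset (Fin 9)) := {{0,1,2}, {0,1,3}, {0,1,4}, {1,3,4}, {0,2,5}, {0,2,6}, {0,5,6}, {2,5,6}, {1,2,7}, {1,2,8}, {1,7,8}, {2,7,8}}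

def setE0b : Finset (Finset (Fin 9)) := {{0,1,2}, {0,1,3}, {0,1,4}, {0,3,4}, {0,2,5}, {0,2,6}, {0,5,6}, {2,5,6}, {1,2,7}, {1,2,8}, {1,7,8}, {2,7,8}}

def setD1 : Finset (Finset (Fin 9)) := {{0,1,2}, {0,1,3}, {0,1,4}, {0,2,5}, {0,2,6}, {0,5,6}, {2,5,6}, {1,2,7}, {1,2,8}, {1,7,8}, {2,7,8}}

def setE1a : Finset (Finset (Fin 9)) := {{0,1,2}, {0,1,3}, {0,1,4}, {0,2,5}, {0,2,6}, {2,5,6}, {1,2,7}, {1,2,8}, {1,7,8}, {2,7,8}}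

def setE1b : Finset (Finset (Fin 9)) := {{0,1,2}, {0,1,3}, {0,1,4}, {0,2,5}, {0,2,6}, {0,5,6}, {1,2,7}, {1,2,8}, {1,7,8}, {2,7,8}}

def setD2 : Finset (Finset (Fin 9)) := {{0,1,2}, {0,1,3}, {0,1,4}, {0,2,5}, {0,2,6}, {1,2,7}, {1,2,8}, {1,7,8}, {2,7,8}}

def setE2a : Finset (Finset (Fin 9)) := {{0,1,2}, {0,1,3}, {0,1,4}, {0,2,5}, {0,2,6}, {1,2,7}, {1,2,8}, {2,7,8}}

def setE2b : Finset (Finset (Fin 9)) := {{0,1,2}, {0,1,3}, {0,1,4}, {0,2,5}, {0,2,6}, {1,2,7}, {1,2,8}, {1,7,8}}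

def setD3 : Finset (Finset (Fin 9)) := {{0,1,2}, {0,1,3}, {0,1,4}, {0,2,5}, {0,2,6}, {1,2,7}, {1,2,8}}

def setD4 : Finset (Finset (Fin 9)) := {{0,1,2}, {0,1,3}, {0,2,5}, {0,2,6}, {1,2,7}, {1,2,8}}

def setD5 : Finset (Finset (Fin 9)) := {{0,1,2}, {0,2,5}, {0,2,6}, {1,2,7}, {1,2,8}}

def setD6 : Finset (Finset (Fin 9)) := {{0,1,2}, {0,2,6}, {1,2,7}, {1,2,8}}

def setD7 : Finset (Finset (Fin 9)) := {{0,1,2}, {1,2,7}, {1,2,8}}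

def setD8 : Finset (Finset (Fin 9)) := {{0,1,2}, {1,2,8}}

def setD9 : Finset (Finset (Fin 9)) := {{0,1,2}}

def setD10 : Finset (Finset (Fin 9)) := (∅ : Finset (Finset (Fin 9)))

lemma combo034 (𝔽 : Type*) [Field 𝔽] :
    bvec 𝔽 9 3 {0,3,4} = bvec 𝔽 9 3 {1,3,4} + bvec 𝔽 9 3 {0,1,4} - bvec 𝔽 9 3 {0,1,3} :=
  bvec_combo (by decide)

lemma combo256 (𝔽 : Type*) [Field 𝔽] :
    bvec 𝔽 9 3 {2,5,6} = bvec 𝔽 9 3 {0,5,6} + bvec 𝔽 9 3 {0,2,5} - bvec 𝔽 9 3 {0,2,6} :=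
  bvec_combo (by decide)

lemma combo278 (𝔽 : Type*) [Field 𝔽] :
    bvec 𝔽 9 3 {2,7,8} = bvec 𝔽 9 3 {1,7,8} + bvec 𝔽 9 3 {1,2,7} - bvec 𝔽 9 3 {1,2,8} :=
  bvec_combo (by decide)

lemma rank_S0 (𝔽 : Type*) [Field 𝔽] : simRank 𝔽 9 3 exS3 = 10 := by
  refine simRank_eq_of exS3 (![{0,1,2}, {0,1,3}, {0,1,4}, {1,3,4}, {0,2,5}, {0,2,6}, {0,5,6}, {1,2,7}, {1,2,8}, {1,7,8}] : Fin 10 → Finset (Fin 9))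
    (![⟨{0,1}, by decide⟩, ⟨{0,3}, by decide⟩, ⟨{0,4}, by decide⟩, ⟨{3,4}, by decide⟩, ⟨{0,5}, by decide⟩, ⟨{0,6}, by decide⟩, ⟨{5,6}, by decide⟩, ⟨{1,7}, by decide⟩, ⟨{1,8}, by decide⟩, ⟨{7,8}, by decide⟩] : Fin 10 → Csets 9 2) (by decide) (by decide) (by decide) ?_
  intro F hF
  simp only [exS3, Finset.mem_insert, Finset.mem_singleton] at hF
  rcases hF with rfl|rfl|rfl|rfl|rfl|rfl|rfl|rfl|rfl|rfl|rfl|rfl|rfl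
  · exact Submodule.subset_span ⟨(0 : Fin 10), rfl⟩
  · exact Submodule.subset_span ⟨(1 : Fin 10), rfl⟩
  · exact Submodule.subset_span ⟨(2 : Fin 10), rfl⟩
  · rw [combo034]
    exact sub_mem (add_mem (Submodule.subset_span ⟨(3 : Fin 10), rfl⟩) (Submodule.subset_span ⟨(2 : Fin 10), rfl⟩)) (Submodule.subset_span ⟨(1 : Fin 10), rfl⟩)
  · exact Submodule.subset_span ⟨(3 : Fin 10), rfl⟩
  · exact Submodule.subset_span ⟨(4 : Fin 10), rfl⟩
  · exact Submodule.subset_span ⟨(5 : Fin 10), rfl⟩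
  · exact Submodule.subset_span ⟨(6 : Fin 10), rfl⟩
  · rw [combo256]
    exact sub_mem (add_mem (Submodule.subset_span ⟨(6 : Fin 10), rfl⟩) (Submodule.subset_span ⟨(4 : Fin 10), rfl⟩)) (Submodule.subset_span ⟨(5 : Fin 10), rfl⟩)
  · exact Submodule.subset_span ⟨(7 : Fin 10), rfl⟩
  · exact Submodule.subset_span ⟨(8 : Fin 10), rfl⟩
  · exact Submodule.subset_span ⟨(9 : Fin 10), rfl⟩
  · rw [combo278]
    exact sub_mem (add_mem (Submodule.subset_span ⟨(9 : Fin 10), rfl⟩) (Submodule.subset_span ⟨(7 : Fin 10), rfl⟩)) (Submodule.subset_span ⟨(8 : Fin 10), rfl⟩)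

lemma rank_E0a (𝔽 : Type*) [Field 𝔽] : simRank 𝔽 9 3 setE0a = 10 := by
  refine simRank_eq_of setE0a (![{0,1,2}, {0,1,3}, {0,1,4}, {1,3,4}, {0,2,5}, {0,2,6}, {0,5,6}, {1,2,7}, {1,2,8}, {1,7,8}] : Fin 10 → Finset (Fin 9))
    (![⟨{0,1}, by decide⟩, ⟨{0,3}, by decide⟩, ⟨{0,4}, by decide⟩, ⟨{3,4}, by decide⟩, ⟨{0,5}, by decide⟩, ⟨{0,6}, by decide⟩, ⟨{5,6}, by decide⟩, ⟨{1,7}, by decide⟩, ⟨{1,8}, by decide⟩, ⟨{7,8}, by decide⟩] : Fin 10 → Csets 9 2) (by decide) (by decide) (by decide) ?_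
  intro F hF
  simp only [setE0a, Finset.mem_insert, Finset.mem_singleton] at hF
  rcases hF with rfl|rfl|rfl|rfl|rfl|rfl|rfl|rfl|rfl|rfl|rfl|rfl
  · exact Submodule.subset_span ⟨(0 : Fin 10), rfl⟩
  · exact Submodule.subset_span ⟨(1 : Fin 10), rfl⟩
  · exact Submodule.subset_span ⟨(2 : Fin 10), rfl⟩
  · exact Submodule.subset_span ⟨(3 : Fin 10), rfl⟩
  · exact Submodule.subset_span ⟨(4 : Fin 10), rfl⟩
  · exact Submodule.subset_span ⟨(5 : Fin 10), rfl⟩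
  · exact Submodule.subset_span ⟨(6 : Fin 10), rfl⟩
  · rw [combo256]
    exact sub_mem (add_mem (Submodule.subset_span ⟨(6 : Fin 10), rfl⟩) (Submodule.subset_span ⟨(4 : Fin 10), rfl⟩)) (Submodule.subset_span ⟨(5 : Fin 10), rfl⟩)
  · exact Submodule.subset_span ⟨(7 : Fin 10), rfl⟩
  · exact Submodule.subset_span ⟨(8 : Fin 10), rfl⟩
  · exact Submodule.subset_span ⟨(9 : Fin 10), rfl⟩
  · rw [combo278]
    exact sub_mem (add_mem (Submodule.subset_span ⟨(9 : Fin 10), rfl⟩) (Submodule.subset_span ⟨(7 : Fin 10), rfl⟩)) (Submodule.subset_span ⟨(8 : Fin 10), rfl⟩)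

lemma rank_E0b (𝔽 : Type*) [Field 𝔽] : simRank 𝔽 9 3 setE0b = 10 := by
  refine simRank_eq_of setE0b (![{0,1,2}, {0,1,3}, {0,1,4}, {0,3,4}, {0,2,5}, {0,2,6}, {0,5,6}, {1,2,7}, {1,2,8}, {1,7,8}] : Fin 10 → Finset (Fin 9))
    (![⟨{0,1}, by decide⟩, ⟨{0,3}, by decide⟩, ⟨{0,4}, by decide⟩, ⟨{3,4}, by decide⟩, ⟨{0,5}, by decide⟩, ⟨{0,6}, by decide⟩, ⟨{5,6}, by decide⟩, ⟨{1,7}, by decide⟩, ⟨{1,8}, by decide⟩, ⟨{7,8}, by decide⟩] : Fin 10 → Csets 9 2) (by decide) (by decide) (by decide) ?_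
  intro F hF
  simp only [setE0b, Finset.mem_insert, Finset.mem_singleton] at hF
  rcases hF with rfl|rfl|rfl|rfl|rfl|rfl|rfl|rfl|rfl|rfl|rfl|rfl
  · exact Submodule.subset_span ⟨(0 : Fin 10), rfl⟩
  · exact Submodule.subset_span ⟨(1 : Fin 10), rfl⟩
  · exact Submodule.subset_span ⟨(2 : Fin 10), rfl⟩
  · exact Submodule.subset_span ⟨(3 : Fin 10), rfl⟩
  · exact Submodule.subset_span ⟨(4 : Fin 10), rfl⟩
  · exact Submodule.subset_span ⟨(5 : Fin 10), rfl⟩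
  · exact Submodule.subset_span ⟨(6 : Fin 10), rfl⟩
  · rw [combo256]
    exact sub_mem (add_mem (Submodule.subset_span ⟨(6 : Fin 10), rfl⟩) (Submodule.subset_span ⟨(4 : Fin 10), rfl⟩)) (Submodule.subset_span ⟨(5 : Fin 10), rfl⟩)
  · exact Submodule.subset_span ⟨(7 : Fin 10), rfl⟩
  · exact Submodule.subset_span ⟨(8 : Fin 10), rfl⟩
  · exact Submodule.subset_span ⟨(9 : Fin 10), rfl⟩
  · rw [combo278]
    exact sub_mem (add_mem (Submodule.subset_span ⟨(9 : Fin 10), rfl⟩) (Submodule.subset_span ⟨(7 : Fin 10), rfl⟩)) (Submodule.subset_span ⟨(8 : Fin 10), rfl⟩)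

lemma rank_D1 (𝔽 : Type*) [Field 𝔽] : simRank 𝔽 9 3 setD1 = 9 := by
  refine simRank_eq_of setD1 (![{0,1,2}, {0,1,3}, {0,1,4}, {0,2,5}, {0,2,6}, {0,5,6}, {1,2,7}, {1,2,8}, {1,7,8}] : Fin 9 → Finset (Fin 9))
    (![⟨{0,1}, by decide⟩, ⟨{0,3}, by decide⟩, ⟨{0,4}, by decide⟩, ⟨{0,5}, by decide⟩, ⟨{0,6}, by decide⟩, ⟨{5,6}, by decide⟩, ⟨{1,7}, by decide⟩, ⟨{1,8}, by decide⟩, ⟨{7,8}, by decide⟩] : Fin 9 → Csets 9 2) (by decide) (by decide) (by decide) ?_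
  intro F hF
  simp only [setD1, Finset.mem_insert, Finset.mem_singleton] at hF
  rcases hF with rfl|rfl|rfl|rfl|rfl|rfl|rfl|rfl|rfl|rfl|rfl
  · exact Submodule.subset_span ⟨(0 : Fin 9), rfl⟩
  · exact Submodule.subset_span ⟨(1 : Fin 9), rfl⟩
  · exact Submodule.subset_span ⟨(2 : Fin 9), rfl⟩
  · exact Submodule.subset_span ⟨(3 : Fin 9), rfl⟩
  · exact Submodule.subset_span ⟨(4 : Fin 9), rfl⟩
  · exact Submodule.subset_span ⟨(5 : Fin 9), rfl⟩
  · rw [combo256]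
    exact sub_mem (add_mem (Submodule.subset_span ⟨(5 : Fin 9), rfl⟩) (Submodule.subset_span ⟨(3 : Fin 9), rfl⟩)) (Submodule.subset_span ⟨(4 : Fin 9), rfl⟩)
  · exact Submodule.subset_span ⟨(6 : Fin 9), rfl⟩
  · exact Submodule.subset_span ⟨(7 : Fin 9), rfl⟩
  · exact Submodule.subset_span ⟨(8 : Fin 9), rfl⟩
  · rw [combo278]
    exact sub_mem (add_mem (Submodule.subset_span ⟨(8 : Fin 9), rfl⟩) (Submodule.subset_span ⟨(6 : Fin 9), rfl⟩)) (Submodule.subset_span ⟨(7 : Fin 9), rfl⟩)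

lemma rank_E1a (𝔽 : Type*) [Field 𝔽] : simRank 𝔽 9 3 setE1a = 9 := by
  refine simRank_eq_of setE1a (![{0,1,2}, {0,1,3}, {0,1,4}, {0,2,5}, {0,2,6}, {2,5,6}, {1,2,7}, {1,2,8}, {1,7,8}] : Fin 9 → Finset (Fin 9))
    (![⟨{0,1}, by decide⟩, ⟨{0,3}, by decide⟩, ⟨{0,4}, by decide⟩, ⟨{0,5}, by decide⟩, ⟨{0,6}, by decide⟩, ⟨{5,6}, by decide⟩, ⟨{1,7}, by decide⟩, ⟨{1,8}, by decide⟩, ⟨{7,8}, by decide⟩] : Fin 9 → Csets 9 2) (by decide) (by decide) (by decide) ?_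
  intro F hF
  simp only [setE1a, Finset.mem_insert, Finset.mem_singleton] at hF
  rcases hF with rfl|rfl|rfl|rfl|rfl|rfl|rfl|rfl|rfl|rfl
  · exact Submodule.subset_span ⟨(0 : Fin 9), rfl⟩
  · exact Submodule.subset_span ⟨(1 : Fin 9), rfl⟩
  · exact Submodule.subset_span ⟨(2 : Fin 9), rfl⟩
  · exact Submodule.subset_span ⟨(3 : Fin 9), rfl⟩
  · exact Submodule.subset_span ⟨(4 : Fin 9), rfl⟩
  · exact Submodule.subset_span ⟨(5 : Fin 9), rfl⟩
  · exact Submodule.subset_span ⟨(6 : Fin 9), rfl⟩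
  · exact Submodule.subset_span ⟨(7 : Fin 9), rfl⟩
  · exact Submodule.subset_span ⟨(8 : Fin 9), rfl⟩
  · rw [combo278]
    exact sub_mem (add_mem (Submodule.subset_span ⟨(8 : Fin 9), rfl⟩) (Submodule.subset_span ⟨(6 : Fin 9), rfl⟩)) (Submodule.subset_span ⟨(7 : Fin 9), rfl⟩)

lemma rank_E1b (𝔽 : Type*) [Field 𝔽] : simRank 𝔽 9 3 setE1b = 9 := by
  refine simRank_eq_of setE1b (![{0,1,2}, {0,1,3}, {0,1,4}, {0,2,5}, {0,2,6}, {0,5,6}, {1,2,7}, {1,2,8}, {1,7,8}] : Fin 9 → Finset (Fin 9))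
    (![⟨{0,1}, by decide⟩, ⟨{0,3}, by decide⟩, ⟨{0,4}, by decide⟩, ⟨{0,5}, by decide⟩, ⟨{0,6}, by decide⟩, ⟨{5,6}, by decide⟩, ⟨{1,7}, by decide⟩, ⟨{1,8}, by decide⟩, ⟨{7,8}, by decide⟩] : Fin 9 → Csets 9 2) (by decide) (by decide) (by decide) ?_
  intro F hF
  simp only [setE1b, Finset.mem_insert, Finset.mem_singleton] at hF
  rcases hF with rfl|rfl|rfl|rfl|rfl|rfl|rfl|rfl|rfl|rfl
  · exact Submodule.subset_span ⟨(0 : Fin 9), rfl⟩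
  · exact Submodule.subset_span ⟨(1 : Fin 9), rfl⟩
  · exact Submodule.subset_span ⟨(2 : Fin 9), rfl⟩
  · exact Submodule.subset_span ⟨(3 : Fin 9), rfl⟩
  · exact Submodule.subset_span ⟨(4 : Fin 9), rfl⟩
  · exact Submodule.subset_span ⟨(5 : Fin 9), rfl⟩
  · exact Submodule.subset_span ⟨(6 : Fin 9), rfl⟩
  · exact Submodule.subset_span ⟨(7 : Fin 9), rfl⟩
  · exact Submodule.subset_span ⟨(8 : Fin 9), rfl⟩
  · rw [combo278]
    exact sub_mem (add_mem (Submodule.subset_span ⟨(8 : Fin 9), rfl⟩) (Submodule.subset_span ⟨(6 : Fin 9), rfl⟩)) (Submodule.subset_span ⟨(7 : Fin 9), rfl⟩)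

lemma rank_D2 (𝔽 : Type*) [Field 𝔽] : simRank 𝔽 9 3 setD2 = 8 := by
  refine simRank_eq_of setD2 (![{0,1,2}, {0,1,3}, {0,1,4}, {0,2,5}, {0,2,6}, {1,2,7}, {1,2,8}, {1,7,8}] : Fin 8 → Finset (Fin 9))
    (![⟨{0,1}, by decide⟩, ⟨{0,3}, by decide⟩, ⟨{0,4}, by decide⟩, ⟨{0,5}, by decide⟩, ⟨{0,6}, by decide⟩, ⟨{1,7}, by decide⟩, ⟨{1,8}, by decide⟩, ⟨{7,8}, by decide⟩] : Fin 8 → Csets 9 2) (by decide) (by decide) (by decide) ?_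
  intro F hF
  simp only [setD2, Finset.mem_insert, Finset.mem_singleton] at hF
  rcases hF with rfl|rfl|rfl|rfl|rfl|rfl|rfl|rfl|rfl
  · exact Submodule.subset_span ⟨(0 : Fin 8), rfl⟩
  · exact Submodule.subset_span ⟨(1 : Fin 8), rfl⟩
  · exact Submodule.subset_span ⟨(2 : Fin 8), rfl⟩
  · exact Submodule.subset_span ⟨(3 : Fin 8), rfl⟩
  · exact Submodule.subset_span ⟨(4 : Fin 8), rfl⟩
  · exact Submodule.subset_span ⟨(5 : Fin 8), rfl⟩
  · exact Submodule.subset_span ⟨(6 : Fin 8), rfl⟩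
  · exact Submodule.subset_span ⟨(7 : Fin 8), rfl⟩
  · rw [combo278]
    exact sub_mem (add_mem (Submodule.subset_span ⟨(7 : Fin 8), rfl⟩) (Submodule.subset_span ⟨(5 : Fin 8), rfl⟩)) (Submodule.subset_span ⟨(6 : Fin 8), rfl⟩)

lemma rank_E2a (𝔽 : Type*) [Field 𝔽] : simRank 𝔽 9 3 setE2a = 8 := by
  refine simRank_eq_of setE2a (![{0,1,2}, {0,1,3}, {0,1,4}, {0,2,5}, {0,2,6}, {1,2,7}, {1,2,8}, {2,7,8}] : Fin 8 → Finset (Fin 9))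
    (![⟨{0,1}, by decide⟩, ⟨{0,3}, by decide⟩, ⟨{0,4}, by decide⟩, ⟨{0,5}, by decide⟩, ⟨{0,6}, by decide⟩, ⟨{1,7}, by decide⟩, ⟨{1,8}, by decide⟩, ⟨{7,8}, by decide⟩] : Fin 8 → Csets 9 2) (by decide) (by decide) (by decide) ?_
  intro F hF
  simp only [setE2a, Finset.mem_insert, Finset.mem_singleton] at hF
  rcases hF with rfl|rfl|rfl|rfl|rfl|rfl|rfl|rfl
  · exact Submodule.subset_span ⟨(0 : Fin 8), rfl⟩
  · exact Submodule.subset_span ⟨(1 : Fin 8), rfl⟩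
  · exact Submodule.subset_span ⟨(2 : Fin 8), rfl⟩
  · exact Submodule.subset_span ⟨(3 : Fin 8), rfl⟩
  · exact Submodule.subset_span ⟨(4 : Fin 8), rfl⟩
  · exact Submodule.subset_span ⟨(5 : Fin 8), rfl⟩
  · exact Submodule.subset_span ⟨(6 : Fin 8), rfl⟩
  · exact Submodule.subset_span ⟨(7 : Fin 8), rfl⟩

lemma rank_E2b (𝔽 : Type*) [Field 𝔽] : simRank 𝔽 9 3 setE2b = 8 := by
  refine simRank_eq_of setE2b (![{0,1,2}, {0,1,3}, {0,1,4}, {0,2,5}, {0,2,6}, {1,2,7}, {1,2,8}, {1,7,8}] : Fin 8 → Finset (Fin 9))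
    (![⟨{0,1}, by decide⟩, ⟨{0,3}, by decide⟩, ⟨{0,4}, by decide⟩, ⟨{0,5}, by decide⟩, ⟨{0,6}, by decide⟩, ⟨{1,7}, by decide⟩, ⟨{1,8}, by decide⟩, ⟨{7,8}, by decide⟩] : Fin 8 → Csets 9 2) (by decide) (by decide) (by decide) ?_
  intro F hF
  simp only [setE2b, Finset.mem_insert, Finset.mem_singleton] at hF
  rcases hF with rfl|rfl|rfl|rfl|rfl|rfl|rfl|rfl
  · exact Submodule.subset_span ⟨(0 : Fin 8), rfl⟩
  · exact Submodule.subset_span ⟨(1 : Fin 8), rfl⟩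
  · exact Submodule.subset_span ⟨(2 : Fin 8), rfl⟩
  · exact Submodule.subset_span ⟨(3 : Fin 8), rfl⟩
  · exact Submodule.subset_span ⟨(4 : Fin 8), rfl⟩
  · exact Submodule.subset_span ⟨(5 : Fin 8), rfl⟩
  · exact Submodule.subset_span ⟨(6 : Fin 8), rfl⟩
  · exact Submodule.subset_span ⟨(7 : Fin 8), rfl⟩

lemma rank_D3 (𝔽 : Type*) [Field 𝔽] : simRank 𝔽 9 3 setD3 = 7 := by
  refine simRank_eq_of setD3 (![{0,1,2}, {0,1,3}, {0,1,4}, {0,2,5}, {0,2,6}, {1,2,7}, {1,2,8}] : Fin 7 → Finset (Fin 9))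
    (![⟨{0,1}, by decide⟩, ⟨{0,3}, by decide⟩, ⟨{0,4}, by decide⟩, ⟨{0,5}, by decide⟩, ⟨{0,6}, by decide⟩, ⟨{1,7}, by decide⟩, ⟨{1,8}, by decide⟩] : Fin 7 → Csets 9 2) (by decide) (by decide) (by decide) ?_
  intro F hF
  simp only [setD3, Finset.mem_insert, Finset.mem_singleton] at hF
  rcases hF with rfl|rfl|rfl|rfl|rfl|rfl|rfl
  · exact Submodule.subset_span ⟨(0 : Fin 7), rfl⟩
  · exact Submodule.subset_span ⟨(1 : Fin 7), rfl⟩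
  · exact Submodule.subset_span ⟨(2 : Fin 7), rfl⟩
  · exact Submodule.subset_span ⟨(3 : Fin 7), rfl⟩
  · exact Submodule.subset_span ⟨(4 : Fin 7), rfl⟩
  · exact Submodule.subset_span ⟨(5 : Fin 7), rfl⟩
  · exact Submodule.subset_span ⟨(6 : Fin 7), rfl⟩

lemma rank_D4 (𝔽 : Type*) [Field 𝔽] : simRank 𝔽 9 3 setD4 = 6 := by
  refine simRank_eq_of setD4 (![{0,1,2}, {0,1,3}, {0,2,5}, {0,2,6}, {1,2,7}, {1,2,8}] : Fin 6 → Finset (Fin 9))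
    (![⟨{0,1}, by decide⟩, ⟨{0,3}, by decide⟩, ⟨{0,5}, by decide⟩, ⟨{0,6}, by decide⟩, ⟨{1,7}, by decide⟩, ⟨{1,8}, by decide⟩] : Fin 6 → Csets 9 2) (by decide) (by decide) (by decide) ?_
  intro F hF
  simp only [setD4, Finset.mem_insert, Finset.mem_singleton] at hF
  rcases hF with rfl|rfl|rfl|rfl|rfl|rfl
  · exact Submodule.subset_span ⟨(0 : Fin 6), rfl⟩
  · exact Submodule.subset_span ⟨(1 : Fin 6), rfl⟩
  · exact Submodule.subset_span ⟨(2 : Fin 6), rfl⟩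
  · exact Submodule.subset_span ⟨(3 : Fin 6), rfl⟩
  · exact Submodule.subset_span ⟨(4 : Fin 6), rfl⟩
  · exact Submodule.subset_span ⟨(5 : Fin 6), rfl⟩

lemma rank_D5 (𝔽 : Type*) [Field 𝔽] : simRank 𝔽 9 3 setD5 = 5 := by
  refine simRank_eq_of setD5 (![{0,1,2}, {0,2,5}, {0,2,6}, {1,2,7}, {1,2,8}] : Fin 5 → Finset (Fin 9))
    (![⟨{0,1}, by decide⟩, ⟨{0,5}, by decide⟩, ⟨{0,6}, by decide⟩, ⟨{1,7}, by decide⟩, ⟨{1,8}, by decide⟩] : Fin 5 → Csets 9 2) (by decide) (by decide) (by decide) ?_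
  intro F hF
  simp only [setD5, Finset.mem_insert, Finset.mem_singleton] at hF
  rcases hF with rfl|rfl|rfl|rfl|rfl
  · exact Submodule.subset_span ⟨(0 : Fin 5), rfl⟩
  · exact Submodule.subset_span ⟨(1 : Fin 5), rfl⟩
  · exact Submodule.subset_span ⟨(2 : Fin 5), rfl⟩
  · exact Submodule.subset_span ⟨(3 : Fin 5), rfl⟩
  · exact Submodule.subset_span ⟨(4 : Fin 5), rfl⟩

lemma rank_D6 (𝔽 : Type*) [Field 𝔽] : simRank 𝔽 9 3 setD6 = 4 := by
  refine simRank_eq_of setD6 (![{0,1,2}, {0,2,6}, {1,2,7}, {1,2,8}] : Fin 4 → Finset (Fin 9))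
    (![⟨{0,1}, by decide⟩, ⟨{0,6}, by decide⟩, ⟨{1,7}, by decide⟩, ⟨{1,8}, by decide⟩] : Fin 4 → Csets 9 2) (by decide) (by decide) (by decide) ?_
  intro F hF
  simp only [setD6, Finset.mem_insert, Finset.mem_singleton] at hF
  rcases hF with rfl|rfl|rfl|rfl
  · exact Submodule.subset_span ⟨(0 : Fin 4), rfl⟩
  · exact Submodule.subset_span ⟨(1 : Fin 4), rfl⟩
  · exact Submodule.subset_span ⟨(2 : Fin 4), rfl⟩
  · exact Submodule.subset_span ⟨(3 : Fin 4), rfl⟩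

lemma rank_D7 (𝔽 : Type*) [Field 𝔽] : simRank 𝔽 9 3 setD7 = 3 := by
  refine simRank_eq_of setD7 (![{0,1,2}, {1,2,7}, {1,2,8}] : Fin 3 → Finset (Fin 9))
    (![⟨{0,1}, by decide⟩, ⟨{1,7}, by decide⟩, ⟨{1,8}, by decide⟩] : Fin 3 → Csets 9 2) (by decide) (by decide) (by decide) ?_
  intro F hF
  simp only [setD7, Finset.mem_insert, Finset.mem_singleton] at hF
  rcases hF with rfl|rfl|rfl
  · exact Submodule.subset_span ⟨(0 : Fin 3), rfl⟩
  · exact Submodule.subset_span ⟨(1 : Fin 3), rfl⟩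
  · exact Submodule.subset_span ⟨(2 : Fin 3), rfl⟩

lemma rank_D8 (𝔽 : Type*) [Field 𝔽] : simRank 𝔽 9 3 setD8 = 2 := by
  refine simRank_eq_of setD8 (![{0,1,2}, {1,2,8}] : Fin 2 → Finset (Fin 9))
    (![⟨{0,1}, by decide⟩, ⟨{1,8}, by decide⟩] : Fin 2 → Csets 9 2) (by decide) (by decide) (by decide) ?_
  intro F hF
  simp only [setD8, Finset.mem_insert, Finset.mem_singleton] at hF
  rcases hF with rfl|rfl
  · exact Submodule.subset_span ⟨(0 : Fin 2), rfl⟩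
  · exact Submodule.subset_span ⟨(1 : Fin 2), rfl⟩

lemma rank_D9 (𝔽 : Type*) [Field 𝔽] : simRank 𝔽 9 3 setD9 = 1 := by
  refine simRank_eq_of setD9 (![{0,1,2}] : Fin 1 → Finset (Fin 9))
    (![⟨{0,1}, by decide⟩] : Fin 1 → Csets 9 2) (by decide) (by decide) (by decide) ?_
  intro F hF
  simp only [setD9, Finset.mem_insert, Finset.mem_singleton] at hF
  rcases hF with rfl
  · exact Submodule.subset_span ⟨(0 : Fin 1), rfl⟩

lemma rank_D10 (𝔽 : Type*) [Field 𝔽] : simRank 𝔽 9 3 setD10 = 0 := by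
  refine simRank_eq_of setD10 (![] : Fin 0 → Finset (Fin 9))
    (![] : Fin 0 → Csets 9 2) (by decide) (by decide) (by decide) ?_
  intro F hF
  exact absurd hF (Finset.notMem_empty F)
def setC0 : Finset (Finset (Fin 9)) := {{0,3,4}, {1,3,4}}

def setC1 : Finset (Finset (Fin 9)) := {{0,5,6}, {2,5,6}}

def setC2 : Finset (Finset (Fin 9)) := {{1,7,8}, {2,7,8}}

def setC3 : Finset (Finset (Fin 9)) := {{0,1,4}}

def setC4 : Finset (Finset (Fin 9)) := {{0,1,3}}

def setC5 : Finset (Finset (Fin 9)) := {{0,2,5}}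

def setC6 : Finset (Finset (Fin 9)) := {{0,2,6}}

def setC7 : Finset (Finset (Fin 9)) := {{1,2,7}}

def setC8 : Finset (Finset (Fin 9)) := {{1,2,8}}

def setC9 : Finset (Finset (Fin 9)) := {{0,1,2}}

lemma dseq1 (𝔽 : Type*) [Field 𝔽] : delSeq 𝔽 exS3 exVseq 1 = setD1 := by
  show delSeq 𝔽 exS3 exVseq (0 + 1) = setD1
  rw [delSeq_succ, delSeq_zero, suppδ_eq]
  decide

lemma dseq2 (𝔽 : Type*) [Field 𝔽] : delSeq 𝔽 exS3 exVseq 2 = setD2 := by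
  show delSeq 𝔽 exS3 exVseq (1 + 1) = setD2
  rw [delSeq_succ, dseq1 𝔽, suppδ_eq]
  decide

lemma dseq3 (𝔽 : Type*) [Field 𝔽] : delSeq 𝔽 exS3 exVseq 3 = setD3 := by
  show delSeq 𝔽 exS3 exVseq (2 + 1) = setD3
  rw [delSeq_succ, dseq2 𝔽, suppδ_eq]
  decide

lemma dseq4 (𝔽 : Type*) [Field 𝔽] : delSeq 𝔽 exS3 exVseq 4 = setD4 := by
  show delSeq 𝔽 exS3 exVseq (3 + 1) = setD4
  rw [delSeq_succ, dseq3 𝔽, suppδ_eq]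
  decide

lemma dseq5 (𝔽 : Type*) [Field 𝔽] : delSeq 𝔽 exS3 exVseq 5 = setD5 := by
  show delSeq 𝔽 exS3 exVseq (4 + 1) = setD5
  rw [delSeq_succ, dseq4 𝔽, suppδ_eq]
  decide

lemma dseq6 (𝔽 : Type*) [Field 𝔽] : delSeq 𝔽 exS3 exVseq 6 = setD6 := by
  show delSeq 𝔽 exS3 exVseq (5 + 1) = setD6
  rw [delSeq_succ, dseq5 𝔽, suppδ_eq]
  decide

lemma dseq7 (𝔽 : Type*) [Field 𝔽] : delSeq 𝔽 exS3 exVseq 7 = setD7 := by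
  show delSeq 𝔽 exS3 exVseq (6 + 1) = setD7
  rw [delSeq_succ, dseq6 𝔽, suppδ_eq]
  decide

lemma dseq8 (𝔽 : Type*) [Field 𝔽] : delSeq 𝔽 exS3 exVseq 8 = setD8 := by
  show delSeq 𝔽 exS3 exVseq (7 + 1) = setD8
  rw [delSeq_succ, dseq7 𝔽, suppδ_eq]
  decide

lemma dseq9 (𝔽 : Type*) [Field 𝔽] : delSeq 𝔽 exS3 exVseq 9 = setD9 := by
  show delSeq 𝔽 exS3 exVseq (8 + 1) = setD9
  rw [delSeq_succ, dseq8 𝔽, suppδ_eq]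
  decide

lemma dseq10 (𝔽 : Type*) [Field 𝔽] : delSeq 𝔽 exS3 exVseq 10 = setD10 := by
  show delSeq 𝔽 exS3 exVseq (9 + 1) = setD10
  rw [delSeq_succ, dseq9 𝔽, suppδ_eq]
  decide

lemma cstar0 (𝔽 : Type*) [Field 𝔽] : Cstar 𝔽 exS3 exVseq 0 = setC0 := by
  simp only [Cstar, suppδ_eq]
  decide

lemma cstar1 (𝔽 : Type*) [Field 𝔽] : Cstar 𝔽 exS3 exVseq 1 = setC1 := by
  simp only [Cstar, suppδ_eq]
  decide

lemma cstar2 (𝔽 : Type*) [Field 𝔽] : Cstar 𝔽 exS3 exVseq 2 = setC2 := by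
  simp only [Cstar, suppδ_eq]
  decide

lemma cstar3 (𝔽 : Type*) [Field 𝔽] : Cstar 𝔽 exS3 exVseq 3 = setC3 := by
  simp only [Cstar, suppδ_eq]
  decide

lemma cstar4 (𝔽 : Type*) [Field 𝔽] : Cstar 𝔽 exS3 exVseq 4 = setC4 := by
  simp only [Cstar, suppδ_eq]
  decide

lemma cstar5 (𝔽 : Type*) [Field 𝔽] : Cstar 𝔽 exS3 exVseq 5 = setC5 := by
  simp only [Cstar, suppδ_eq]
  decide

lemma cstar6 (𝔽 : Type*) [Field 𝔽] : Cstar 𝔽 exS3 exVseq 6 = setC6 := by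
  simp only [Cstar, suppδ_eq]
  decide

lemma cstar7 (𝔽 : Type*) [Field 𝔽] : Cstar 𝔽 exS3 exVseq 7 = setC7 := by
  simp only [Cstar, suppδ_eq]
  decide

lemma cstar8 (𝔽 : Type*) [Field 𝔽] : Cstar 𝔽 exS3 exVseq 8 = setC8 := by
  simp only [Cstar, suppδ_eq]
  decide

lemma cstar9 (𝔽 : Type*) [Field 𝔽] : Cstar 𝔽 exS3 exVseq 9 = setC9 := by
  simp only [Cstar, suppδ_eq]
  decide

lemma coc0 (𝔽 : Type*) [Field 𝔽] : SimCocircuit 𝔽 9 3 exS3 setC0 := by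
  refine ⟨by decide, ?_, ?_⟩
  · have e : exS3 \ setC0 = setD1 := by decide
    rw [e, rank_D1 𝔽, rank_S0 𝔽]
    omega
  · intro C' hC'
    rcases ssubset_pair hC' with rfl | rfl | rfl
    · rw [Finset.sdiff_empty]
    · have e : exS3 \ {({0,3,4} : Finset (Fin 9))} = setE0a := by decide
      rw [e, rank_E0a 𝔽, rank_S0 𝔽]
    · have e : exS3 \ {({1,3,4} : Finset (Fin 9))} = setE0b := by decide
      rw [e, rank_E0b 𝔽, rank_S0 𝔽]

lemma coc1 (𝔽 : Type*) [Field 𝔽] : SimCocircuit 𝔽 9 3 setD1 setC1 := by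
  refine ⟨by decide, ?_, ?_⟩
  · have e : setD1 \ setC1 = setD2 := by decide
    rw [e, rank_D2 𝔽, rank_D1 𝔽]
    omega
  · intro C' hC'
    rcases ssubset_pair hC' with rfl | rfl | rfl
    · rw [Finset.sdiff_empty]
    · have e : setD1 \ {({0,5,6} : Finset (Fin 9))} = setE1a := by decide
      rw [e, rank_E1a 𝔽, rank_D1 𝔽]
    · have e : setD1 \ {({2,5,6} : Finset (Fin 9))} = setE1b := by decide
      rw [e, rank_E1b 𝔽, rank_D1 𝔽]

lemma coc2 (𝔽 : Type*) [Field 𝔽] : SimCocircuit 𝔽 9 3 setD2 setC2 := by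
  refine ⟨by decide, ?_, ?_⟩
  · have e : setD2 \ setC2 = setD3 := by decide
    rw [e, rank_D3 𝔽, rank_D2 𝔽]
    omega
  · intro C' hC'
    rcases ssubset_pair hC' with rfl | rfl | rfl
    · rw [Finset.sdiff_empty]
    · have e : setD2 \ {({1,7,8} : Finset (Fin 9))} = setE2a := by decide
      rw [e, rank_E2a 𝔽, rank_D2 𝔽]
    · have e : setD2 \ {({2,7,8} : Finset (Fin 9))} = setE2b := by decide
      rw [e, rank_E2b 𝔽, rank_D2 𝔽]

lemma coc3 (𝔽 : Type*) [Field 𝔽] : SimCocircuit 𝔽 9 3 setD3 setC3 := by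
  refine ⟨by decide, ?_, ?_⟩
  · have e : setD3 \ setC3 = setD4 := by decide
    rw [e, rank_D4 𝔽, rank_D3 𝔽]
    omega
  · intro C' hC'
    simp only [setC3, setC4, setC5, setC6, setC7, setC8, setC9] at hC'
    rw [Finset.ssubset_singleton_iff] at hC'
    subst hC'
    rw [Finset.sdiff_empty]

lemma coc4 (𝔽 : Type*) [Field 𝔽] : SimCocircuit 𝔽 9 3 setD4 setC4 := by
  refine ⟨by decide, ?_, ?_⟩
  · have e : setD4 \ setC4 = setD5 := by decide
    rw [e, rank_D5 𝔽, rank_D4 𝔽]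
    omega
  · intro C' hC'
    simp only [setC3, setC4, setC5, setC6, setC7, setC8, setC9] at hC'
    rw [Finset.ssubset_singleton_iff] at hC'
    subst hC'
    rw [Finset.sdiff_empty]

lemma coc5 (𝔽 : Type*) [Field 𝔽] : SimCocircuit 𝔽 9 3 setD5 setC5 := by
  refine ⟨by decide, ?_, ?_⟩
  · have e : setD5 \ setC5 = setD6 := by decide
    rw [e, rank_D6 𝔽, rank_D5 𝔽]
    omega
  · intro C' hC'
    simp only [setC3, setC4, setC5, setC6, setC7, setC8, setC9] at hC'
    rw [Finset.ssubset_singleton_iff] at hC'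
    subst hC'
    rw [Finset.sdiff_empty]

lemma coc6 (𝔽 : Type*) [Field 𝔽] : SimCocircuit 𝔽 9 3 setD6 setC6 := by
  refine ⟨by decide, ?_, ?_⟩
  · have e : setD6 \ setC6 = setD7 := by decide
    rw [e, rank_D7 𝔽, rank_D6 𝔽]
    omega
  · intro C' hC'
    simp only [setC3, setC4, setC5, setC6, setC7, setC8, setC9] at hC'
    rw [Finset.ssubset_singleton_iff] at hC'
    subst hC'
    rw [Finset.sdiff_empty]

lemma coc7 (𝔽 : Type*) [Field 𝔽] : SimCocircuit 𝔽 9 3 setD7 setC7 := by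
  refine ⟨by decide, ?_, ?_⟩
  · have e : setD7 \ setC7 = setD8 := by decide
    rw [e, rank_D8 𝔽, rank_D7 𝔽]
    omega
  · intro C' hC'
    simp only [setC3, setC4, setC5, setC6, setC7, setC8, setC9] at hC'
    rw [Finset.ssubset_singleton_iff] at hC'
    subst hC'
    rw [Finset.sdiff_empty]

lemma coc8 (𝔽 : Type*) [Field 𝔽] : SimCocircuit 𝔽 9 3 setD8 setC8 := by
  refine ⟨by decide, ?_, ?_⟩
  · have e : setD8 \ setC8 = setD9 := by decide
    rw [e, rank_D9 𝔽, rank_D8 𝔽]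
    omega
  · intro C' hC'
    simp only [setC3, setC4, setC5, setC6, setC7, setC8, setC9] at hC'
    rw [Finset.ssubset_singleton_iff] at hC'
    subst hC'
    rw [Finset.sdiff_empty]

lemma coc9 (𝔽 : Type*) [Field 𝔽] : SimCocircuit 𝔽 9 3 setD9 setC9 := by
  refine ⟨by decide, ?_, ?_⟩
  · have e : setD9 \ setC9 = setD10 := by decide
    rw [e, rank_D10 𝔽, rank_D9 𝔽]
    omega
  · intro C' hC'
    simp only [setC3, setC4, setC5, setC6, setC7, setC8, setC9] at hC'
    rw [Finset.ssubset_singleton_iff] at hC'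
    subst hC'
    rw [Finset.sdiff_empty]

theorem stmt19 (𝔽 : Type*) [Field 𝔽] :
    simRank 𝔽 9 3 exS3 = 10 ∧ DPerfect 𝔽 9 3 exS3 ∧
      BasicLinearSeq 𝔽 9 3 exS3 10 exVseq ∧
      ∀ j < 10, SimplicialFace 3 (delSeq 𝔽 exS3 exVseq j) (exVseq j) := by
  have d0 : delSeq 𝔽 exS3 exVseq 0 = exS3 := rfl
  have hcoc : ∀ j < 10, SimCocircuit 𝔽 9 3 (delSeq 𝔽 exS3 exVseq j) (Cstar 𝔽 exS3 exVseq j) := by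
    intro j hj
    interval_cases j
    · rw [d0, cstar0 𝔽]; exact coc0 𝔽
    · rw [dseq1 𝔽, cstar1 𝔽]; exact coc1 𝔽
    · rw [dseq2 𝔽, cstar2 𝔽]; exact coc2 𝔽
    · rw [dseq3 𝔽, cstar3 𝔽]; exact coc3 𝔽
    · rw [dseq4 𝔽, cstar4 𝔽]; exact coc4 𝔽
    · rw [dseq5 𝔽, cstar5 𝔽]; exact coc5 𝔽
    · rw [dseq6 𝔽, cstar6 𝔽]; exact coc6 𝔽
    · rw [dseq7 𝔽, cstar7 𝔽]; exact coc7 𝔽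
    · rw [dseq8 𝔽, cstar8 𝔽]; exact coc8 𝔽
    · rw [dseq9 𝔽, cstar9 𝔽]; exact coc9 𝔽
  have hsf : ∀ j < 10, SimplicialFace 3 (delSeq 𝔽 exS3 exVseq j) (exVseq j) := by
    intro j hj
    interval_cases j
    · rw [d0]
      refine simplicialFace_of (X₀ := {0,1,3,4}) (by decide) (by decide) ?_ (by decide)
      rw [isFace_iff_faceD]; decide
    · rw [dseq1 𝔽]
      refine simplicialFace_of (X₀ := {0,2,5,6}) (by decide) (by decide) ?_ (by decide)
      rw [isFace_iff_faceD]; decide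
    · rw [dseq2 𝔽]
      refine simplicialFace_of (X₀ := {1,2,7,8}) (by decide) (by decide) ?_ (by decide)
      rw [isFace_iff_faceD]; decide
    · rw [dseq3 𝔽]
      refine simplicialFace_of (X₀ := {0,1,4}) (by decide) (by decide) ?_ (by decide)
      rw [isFace_iff_faceD]; decide
    · rw [dseq4 𝔽]
      refine simplicialFace_of (X₀ := {0,1,3}) (by decide) (by decide) ?_ (by decide)
      rw [isFace_iff_faceD]; decide
    · rw [dseq5 𝔽]
      refine simplicialFace_of (X₀ := {0,2,5}) (by decide) (by decide) ?_ (by decide)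
      rw [isFace_iff_faceD]; decide
    · rw [dseq6 𝔽]
      refine simplicialFace_of (X₀ := {0,2,6}) (by decide) (by decide) ?_ (by decide)
      rw [isFace_iff_faceD]; decide
    · rw [dseq7 𝔽]
      refine simplicialFace_of (X₀ := {1,2,7}) (by decide) (by decide) ?_ (by decide)
      rw [isFace_iff_faceD]; decide
    · rw [dseq8 𝔽]
      refine simplicialFace_of (X₀ := {1,2,8}) (by decide) (by decide) ?_ (by decide)
      rw [isFace_iff_faceD]; decide
    · rw [dseq9 𝔽]
      refine simplicialFace_of (X₀ := {0,1,2}) (by decide) (by decide) ?_ (by decide)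
      rw [isFace_iff_faceD]; decide
  have hbls : BasicLinearSeq 𝔽 9 3 exS3 10 exVseq :=
    ⟨rank_S0 𝔽, by intro j hj; interval_cases j <;> decide, hcoc⟩
  refine ⟨rank_S0 𝔽, ⟨exVseq, ?_, ?_⟩, hbls, hsf⟩
  · rw [rank_S0 𝔽]; exact hbls
  · rw [rank_S0 𝔽]; exact hsf
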